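/- Let N ⊆ ℚ²⁴ = (ℚ⁴)⁶ be the ℤ-submodule generated by D₄⁶ = D₄ × ⋯ × D₄ (6 factors) together with the seven vectors ([1],[1],[1],[1],[1],[1]), ([2],[2],[2],[2],[2],[2]), ([0],[0],[2],[3],[3],[2]), ([0],[2],[3],[3],[2],[0]), ([0],[3],[3],[2],[0],[2]), ([0],[3],[2],[0],[2],[3]), ([0],[2],[0],[2],[3],[3]), where [0]=(0,0,0,0), [1]=(½,½,½,½), [2]=(0,0,0,1), [3]=(½,½,½,−½), and equip ℚ²⁴ with the standard inner product. Let φ⁽⁶⁾ : ℚ²⁴ → ℚ²⁴ apply to each of the six ℚ⁴-blocks the linear map φ with φ(e₁)=½(−1,1,1,1), φ(e₂)=½(−1,−1,1,−1), φ(e₃)=½(−1,−1,−1,1), φ(e₄)=½(−1,1,−1,−1). Then: N is an even unimodular positive-definite lattice of rank 24; φ⁽⁶⁾(N) = N; φ⁽⁶⁾ is an isometry of order 3; and the fixed-point set {x ∈ N : φ⁽⁶⁾(x) = x} equals {0}. -/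

import Mathlib

/-- The standard inner product on `ℚ²⁴ = (ℚ⁴)⁶`. -/
def dotQ (x y : Fin 6 → Fin 4 → ℚ) : ℚ := ∑ i, ∑ j, x i j * y i j

/-- The lattice `D₄ = {x ∈ ℤ⁴ : x₁+x₂+x₃+x₄ ∈ 2ℤ}`, viewed as a `ℤ`-submodule
(additive subgroup) of `ℚ⁴`. -/
def D4Q : AddSubgroup (Fin 4 → ℚ) where
  carrier := {x | (∀ j, ∃ k : ℤ, x j = k) ∧ ∃ m : ℤ, ∑ j, x j = 2 * m}
  add_mem' := by
    rintro a b ⟨haint, ma, hma⟩ ⟨hbint, mb, hmb⟩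
    refine ⟨fun j => ?_, ⟨ma + mb, ?_⟩⟩
    · obtain ⟨k, hk⟩ := haint j
      obtain ⟨l, hl⟩ := hbint j
      exact ⟨k + l, by simp [hk, hl]⟩
    · simp only [Pi.add_apply, Finset.sum_add_distrib, hma, hmb]
      push_cast; ring
  zero_mem' := ⟨fun j => ⟨0, by simp⟩, ⟨0, by simp⟩⟩
  neg_mem' := by
    rintro a ⟨haint, ma, hma⟩
    refine ⟨fun j => ?_, ⟨-ma, ?_⟩⟩
    · obtain ⟨k, hk⟩ := haint j
      exact ⟨-k, by simp [hk]⟩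
    · simp only [Pi.neg_apply, Finset.sum_neg_distrib, hma]
      push_cast; ring

/-- The glue vectors `[0] = (0,0,0,0)`, `[1] = (½,½,½,½)`, `[2] = (0,0,0,1)`,
`[3] = (½,½,½,−½)` in `ℚ⁴`. -/
def glue : Fin 4 → Fin 4 → ℚ :=
  ![![0, 0, 0, 0], ![1/2, 1/2, 1/2, 1/2], ![0, 0, 0, 1], ![1/2, 1/2, 1/2, -1/2]]

/-- The seven glue vectors `[111111]`, `[222222]`, `[002332]`, `[023320]`, `[033202]`,
`[032023]`, `[020233]` of the Niemeier lattice `Ni(D₄⁶)` in `ℚ²⁴`. -/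
def glueVecs : Fin 7 → Fin 6 → Fin 4 → ℚ :=
  ![![glue 1, glue 1, glue 1, glue 1, glue 1, glue 1],
    ![glue 2, glue 2, glue 2, glue 2, glue 2, glue 2],
    ![glue 0, glue 0, glue 2, glue 3, glue 3, glue 2],
    ![glue 0, glue 2, glue 3, glue 3, glue 2, glue 0],
    ![glue 0, glue 3, glue 3, glue 2, glue 0, glue 2],
    ![glue 0, glue 3, glue 2, glue 0, glue 2, glue 3],
    ![glue 0, glue 2, glue 0, glue 2, glue 3, glue 3]]

/-- The `ℤ`-submodule `N ⊆ ℚ²⁴` generated by `D₄⁶` together with the seven glue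
vectors: the Niemeier lattice `Ni(D₄⁶)`. -/
def NLat : AddSubgroup (Fin 6 → Fin 4 → ℚ) :=
  AddSubgroup.closure ({x | ∀ i, x i ∈ D4Q} ∪ Set.range glueVecs)

/-- Twice the matrix of the map `φ` on `ℚ⁴`: `φ(e₁) = ½(−1,1,1,1)`,
`φ(e₂) = ½(−1,−1,1,−1)`, `φ(e₃) = ½(−1,−1,−1,1)`, `φ(e₄) = ½(−1,1,−1,−1)`. -/
def phiMQ : Matrix (Fin 4) (Fin 4) ℚ :=
  !![-1,-1,-1,-1; 1,-1,-1,1; 1,1,-1,-1; 1,-1,1,-1]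

/-- The map `φ⁽⁶⁾ : ℚ²⁴ → ℚ²⁴` applying `φ` to each of the six `ℚ⁴`-blocks. -/
def phi6 (x : Fin 6 → Fin 4 → ℚ) : Fin 6 → Fin 4 → ℚ :=
  fun i => ((1/2 : ℚ) • phiMQ).mulVec (x i)

def Bz : Fin 24 → Fin 6 → Fin 4 → ℤ :=
  ![![![1,1,1,1],![0,0,0,0],![0,0,0,0],![0,0,0,2],![1,1,1,1],![0,0,0,2]], ![![0,2,0,0],![0,0,0,0],![0,0,0,0],![1,1,1,3],![0,0,0,2],![1,1,1,3]], ![![0,0,2,0],![0,0,0,0],![0,0,0,0],![1,1,1,3],![0,0,0,2],![1,1,1,3]], ![![0,0,0,2],![0,0,0,0],![0,0,0,0],![1,1,1,3],![0,0,0,2],![1,1,1,3]], ![![0,0,0,0],![1,1,1,1],![0,0,0,0],![1,1,1,1],![0,0,0,2],![0,0,0,2]], ![![0,0,0,0],![0,2,0,0],![0,0,0,0],![0,0,0,2],![1,1,1,3],![1,1,1,3]], ![![0,0,0,0],![0,0,2,0],![0,0,0,0],![0,0,0,2],![1,1,1,3],![1,1,1,3]], ![![0,0,0,0],![0,0,0,2],![0,0,0,0],![0,0,0,2],![1,1,1,3],![1,1,1,3]],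 ![![0,0,0,0],![0,0,0,0],![1,1,1,1],![0,0,0,2],![0,0,0,2],![1,1,1,1]], ![![0,0,0,0],![0,0,0,0],![0,2,0,0],![1,1,1,3],![1,1,1,3],![0,0,0,2]], ![![0,0,0,0],![0,0,0,0],![0,0,2,0],![1,1,1,3],![1,1,1,3],![0,0,0,2]], ![![0,0,0,0],![0,0,0,0],![0,0,0,2],![1,1,1,3],![1,1,1,3],![0,0,0,2]], ![![0,0,0,0],![0,0,0,0],![0,0,0,0],![2,0,0,2],![0,0,0,0],![0,0,0,0]], ![![0,0,0,0],![0,0,0,0],![0,0,0,0],![0,2,0,2],![0,0,0,0],![0,0,0,0]], ![![0,0,0,0],![0,0,0,0],![0,0,0,0],![0,0,2,2],![0,0,0,0],![0,0,0,0]], ![![0,0,0,0],![0,0,0,0],![0,0,0,0],![0,0,0,4],![0,0,0,0],![0,0,0,0]], ![![0,0,0,0],![0,0,0,0],![0,0,0,0],![0,0,0,0],![2,0,0,2],![0,0,0,0]], ![![0,0,0,0],![0,0,0,0],![0,0,0,0],![0,0,0,0],![0,2,0,2],![0,0,0,0]], ![![0,0,0,0],![0,0,0,0],![0,0,0,0],![0,0,0,0],![0,0,2,2],![0,0,0,0]],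 ![![0,0,0,0],![0,0,0,0],![0,0,0,0],![0,0,0,0],![0,0,0,4],![0,0,0,0]], ![![0,0,0,0],![0,0,0,0],![0,0,0,0],![0,0,0,0],![0,0,0,0],![2,0,0,2]], ![![0,0,0,0],![0,0,0,0],![0,0,0,0],![0,0,0,0],![0,0,0,0],![0,2,0,2]], ![![0,0,0,0],![0,0,0,0],![0,0,0,0],![0,0,0,0],![0,0,0,0],![0,0,2,2]], ![![0,0,0,0],![0,0,0,0],![0,0,0,0],![0,0,0,0],![0,0,0,0],![0,0,0,4]]]

def Bv : Fin 24 → Fin 6 → Fin 4 → ℚ := fun k i j => (Bz k i j : ℚ)/2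

def Gz : Matrix (Fin 24) (Fin 24) ℤ :=
  ![![4,4,4,4,2,4,4,4,2,4,4,4,1,1,1,2,1,1,1,1,1,1,1,2], ![4,8,7,7,4,6,6,6,4,6,6,6,2,2,2,3,1,1,1,2,2,2,2,3], ![4,7,8,7,4,6,6,6,4,6,6,6,2,2,2,3,1,1,1,2,2,2,2,3], ![4,7,7,8,4,6,6,6,4,6,6,6,2,2,2,3,1,1,1,2,2,2,2,3], ![2,4,4,4,4,4,4,4,2,4,4,4,1,1,1,1,1,1,1,2,1,1,1,2], ![4,6,6,6,4,8,7,7,4,6,6,6,1,1,1,2,2,2,2,3,2,2,2,3], ![4,6,6,6,4,7,8,7,4,6,6,6,1,1,1,2,2,2,2,3,2,2,2,3], ![4,6,6,6,4,7,7,8,4,6,6,6,1,1,1,2,2,2,2,3,2,2,2,3], ![2,4,4,4,2,4,4,4,4,4,4,4,1,1,1,2,1,1,1,2,1,1,1,1], ![4,6,6,6,4,6,6,6,4,8,7,7,2,2,2,3,2,2,2,3,1,1,1,2], ![4,6,6,6,4,6,6,6,4,7,8,7,2,2,2,3,2,2,2,3,1,1,1,2], ![4,6,6,6,4,6,6,6,4,7,7,8,2,2,2,3,2,2,2,3,1,1,1,2],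 ![1,2,2,2,1,1,1,1,1,2,2,2,2,1,1,2,0,0,0,0,0,0,0,0], ![1,2,2,2,1,1,1,1,1,2,2,2,1,2,1,2,0,0,0,0,0,0,0,0], ![1,2,2,2,1,1,1,1,1,2,2,2,1,1,2,2,0,0,0,0,0,0,0,0], ![2,3,3,3,1,2,2,2,2,3,3,3,2,2,2,4,0,0,0,0,0,0,0,0], ![1,1,1,1,1,2,2,2,1,2,2,2,0,0,0,0,2,1,1,2,0,0,0,0], ![1,1,1,1,1,2,2,2,1,2,2,2,0,0,0,0,1,2,1,2,0,0,0,0], ![1,1,1,1,1,2,2,2,1,2,2,2,0,0,0,0,1,1,2,2,0,0,0,0], ![1,2,2,2,2,3,3,3,2,3,3,3,0,0,0,0,2,2,2,4,0,0,0,0], ![1,2,2,2,1,2,2,2,1,1,1,1,0,0,0,0,0,0,0,0,2,1,1,2], ![1,2,2,2,1,2,2,2,1,1,1,1,0,0,0,0,0,0,0,0,1,2,1,2], ![1,2,2,2,1,2,2,2,1,1,1,1,0,0,0,0,0,0,0,0,1,1,2,2], ![2,3,3,3,2,3,3,3,1,2,2,2,0,0,0,0,0,0,0,0,2,2,2,4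]]

def Hzm : Matrix (Fin 24) (Fin 24) ℤ :=
  ![![4,-2,-2,-2,0,0,0,0,0,0,0,0,3,3,3,-2,-2,-2,-2,5,3,3,3,-2], ![-2,2,1,1,0,0,0,0,0,0,0,0,-2,-2,-2,1,1,1,1,-3,-2,-2,-2,1], ![-2,1,2,1,0,0,0,0,0,0,0,0,-2,-2,-2,1,1,1,1,-3,-2,-2,-2,1], ![-2,1,1,2,0,0,0,0,0,0,0,0,-2,-2,-2,1,1,1,1,-3,-2,-2,-2,1], ![0,0,0,0,4,-2,-2,-2,0,0,0,0,-2,-2,-2,5,3,3,3,-2,3,3,3,-2], ![0,0,0,0,-2,2,1,1,0,0,0,0,1,1,1,-3,-2,-2,-2,1,-2,-2,-2,1], ![0,0,0,0,-2,1,2,1,0,0,0,0,1,1,1,-3,-2,-2,-2,1,-2,-2,-2,1], ![0,0,0,0,-2,1,1,2,0,0,0,0,1,1,1,-3,-2,-2,-2,1,-2,-2,-2,1], ![0,0,0,0,0,0,0,0,4,-2,-2,-2,3,3,3,-2,3,3,3,-2,-2,-2,-2,5], ![0,0,0,0,0,0,0,0,-2,2,1,1,-2,-2,-2,1,-2,-2,-2,1,1,1,1,-3],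 ![0,0,0,0,0,0,0,0,-2,1,2,1,-2,-2,-2,1,-2,-2,-2,1,1,1,1,-3], ![0,0,0,0,0,0,0,0,-2,1,1,2,-2,-2,-2,1,-2,-2,-2,1,1,1,1,-3], ![3,-2,-2,-2,-2,1,1,1,3,-2,-2,-2,8,7,7,-6,0,0,0,4,0,0,0,4], ![3,-2,-2,-2,-2,1,1,1,3,-2,-2,-2,7,8,7,-6,0,0,0,4,0,0,0,4], ![3,-2,-2,-2,-2,1,1,1,3,-2,-2,-2,7,7,8,-6,0,0,0,4,0,0,0,4], ![-2,1,1,1,5,-3,-3,-3,-2,1,1,1,-6,-6,-6,10,4,4,4,-4,4,4,4,-4], ![-2,1,1,1,3,-2,-2,-2,3,-2,-2,-2,0,0,0,4,8,7,7,-6,0,0,0,4], ![-2,1,1,1,3,-2,-2,-2,3,-2,-2,-2,0,0,0,4,7,8,7,-6,0,0,0,4], ![-2,1,1,1,3,-2,-2,-2,3,-2,-2,-2,0,0,0,4,7,7,8,-6,0,0,0,4], ![5,-3,-3,-3,-2,1,1,1,-2,1,1,1,4,4,4,-4,-6,-6,-6,10,4,4,4,-4], ![3,-2,-2,-2,3,-2,-2,-2,-2,1,1,1,0,0,0,4,0,0,0,4,8,7,7,-6],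 ![3,-2,-2,-2,3,-2,-2,-2,-2,1,1,1,0,0,0,4,0,0,0,4,7,8,7,-6], ![3,-2,-2,-2,3,-2,-2,-2,-2,1,1,1,0,0,0,4,0,0,0,4,7,7,8,-6], ![-2,1,1,1,-2,1,1,1,5,-3,-3,-3,4,4,4,-4,4,4,4,-4,-6,-6,-6,10]]

def zG : Fin 7 → Fin 24 → ℤ :=
  ![![1,0,0,0,1,0,0,0,1,0,0,0,0,0,0,-1,0,0,0,-1,0,0,0,-1], ![0,0,0,1,0,0,0,1,0,0,0,1,-1,-1,-1,0,-1,-1,-1,0,-1,-1,-1,0], ![0,0,0,0,0,0,0,0,0,0,0,1,0,0,0,-1,0,0,0,-1,0,0,0,0], ![0,0,0,0,0,0,0,1,1,0,0,-1,1,1,1,-2,0,0,0,0,-1,-1,-1,1], ![0,0,0,0,1,0,0,-1,1,0,0,-1,0,0,0,1,1,1,1,-1,0,0,0,1], ![0,0,0,0,1,0,0,-1,0,0,0,1,-1,-1,-1,1,0,0,0,0,1,1,1,-2], ![0,0,0,0,0,0,0,1,0,0,0,0,0,0,0,0,0,0,0,-1,0,0,0,-1]]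

def zE : Fin 6 → Fin 4 → Fin 24 → ℤ :=
  ![![![2,-2,-1,-1,0,0,0,0,0,0,0,0,2,2,2,-1,-1,-1,-1,3,2,2,2,-1], ![0,1,-1,0,0,0,0,0,0,0,0,0,0,0,0,0,0,0,0,0,0,0,0,0], ![0,0,1,-1,0,0,0,0,0,0,0,0,0,0,0,0,0,0,0,0,0,0,0,0], ![0,0,1,1,0,0,0,0,0,0,0,0,-1,-1,-1,0,0,0,0,-1,-1,-1,-1,0]], ![![0,0,0,0,2,-2,-1,-1,0,0,0,0,-1,-1,-1,3,2,2,2,-1,2,2,2,-1], ![0,0,0,0,0,1,-1,0,0,0,0,0,0,0,0,0,0,0,0,0,0,0,0,0], ![0,0,0,0,0,0,1,-1,0,0,0,0,0,0,0,0,0,0,0,0,0,0,0,0], ![0,0,0,0,0,0,1,1,0,0,0,0,0,0,0,-1,-1,-1,-1,0,-1,-1,-1,0]], ![![0,0,0,0,0,0,0,0,2,-2,-1,-1,2,2,2,-1,2,2,2,-1,-1,-1,-1,3], ![0,0,0,0,0,0,0,0,0,1,-1,0,0,0,0,0,0,0,0,0,0,0,0,0], ![0,0,0,0,0,0,0,0,0,0,1,-1,0,0,0,0,0,0,0,0,0,0,0,0],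 ![0,0,0,0,0,0,0,0,0,0,1,1,-1,-1,-1,0,-1,-1,-1,0,0,0,0,-1]], ![![0,0,0,0,0,0,0,0,0,0,0,0,1,-1,0,0,0,0,0,0,0,0,0,0], ![0,0,0,0,0,0,0,0,0,0,0,0,0,1,-1,0,0,0,0,0,0,0,0,0], ![0,0,0,0,0,0,0,0,0,0,0,0,0,0,1,-1,0,0,0,0,0,0,0,0], ![0,0,0,0,0,0,0,0,0,0,0,0,0,0,1,0,0,0,0,0,0,0,0,0]], ![![0,0,0,0,0,0,0,0,0,0,0,0,0,0,0,0,1,-1,0,0,0,0,0,0], ![0,0,0,0,0,0,0,0,0,0,0,0,0,0,0,0,0,1,-1,0,0,0,0,0], ![0,0,0,0,0,0,0,0,0,0,0,0,0,0,0,0,0,0,1,-1,0,0,0,0], ![0,0,0,0,0,0,0,0,0,0,0,0,0,0,0,0,0,0,1,0,0,0,0,0]], ![![0,0,0,0,0,0,0,0,0,0,0,0,0,0,0,0,0,0,0,0,1,-1,0,0], ![0,0,0,0,0,0,0,0,0,0,0,0,0,0,0,0,0,0,0,0,0,1,-1,0], ![0,0,0,0,0,0,0,0,0,0,0,0,0,0,0,0,0,0,0,0,0,0,1,-1],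 ![0,0,0,0,0,0,0,0,0,0,0,0,0,0,0,0,0,0,0,0,0,0,1,0]]]

def Bw : Fin 24 → Fin 7 → ℤ :=
  ![![1,0,0,1,0,1,0], ![0,1,0,1,1,1,0], ![0,1,0,1,1,1,0], ![0,1,0,1,1,1,0], ![0,0,0,1,1,0,0], ![0,0,1,1,1,1,0], ![0,0,1,1,1,1,0], ![0,0,1,1,1,1,0], ![0,0,0,0,1,1,0], ![0,0,1,0,0,0,0], ![0,0,1,0,0,0,0], ![0,0,1,0,0,0,0], ![0,0,0,0,0,0,0], ![0,0,0,0,0,0,0], ![0,0,0,0,0,0,0], ![0,0,0,0,0,0,0], ![0,0,0,0,0,0,0], ![0,0,0,0,0,0,0], ![0,0,0,0,0,0,0], ![0,0,0,0,0,0,0], ![0,0,0,0,0,0,0], ![0,0,0,0,0,0,0], ![0,0,0,0,0,0,0], ![0,0,0,0,0,0,0]]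

def Bc : Fin 24 → Fin 6 → Fin 4 → ℤ :=
  ![![![0,0,0,0],![-1,-1,-1,-1],![-1,-1,-1,-1],![-1,-1,-1,1],![0,0,0,-2],![-1,-1,-1,1]], ![![0,1,0,-1],![-1,-1,-1,-1],![-1,-1,-1,-1],![0,0,0,0],![0,0,0,-2],![0,0,0,0]], ![![0,0,1,-1],![-1,-1,-1,-1],![-1,-1,-1,-1],![0,0,0,0],![0,0,0,-2],![0,0,0,0]], ![![0,0,0,0],![-1,-1,-1,-1],![-1,-1,-1,-1],![0,0,0,0],![0,0,0,-2],![0,0,0,0]], ![![0,0,0,0],![0,0,0,0],![-1,-1,-1,1],![0,0,0,0],![0,0,0,0],![0,0,0,0]], ![![0,0,0,0],![-1,0,-1,0],![-1,-1,-1,-1],![-1,-1,-1,1],![0,0,0,0],![0,0,0,0]], ![![0,0,0,0],![-1,-1,0,0],![-1,-1,-1,-1],![-1,-1,-1,1],![0,0,0,0],![0,0,0,0]], ![![0,0,0,0],![-1,-1,-1,1],![-1,-1,-1,-1],![-1,-1,-1,1],![0,0,0,0],![0,0,0,0]], ![![0,0,0,0],![-1,-1,-1,1],![0,0,0,0],![0,0,0,0],![0,0,0,0],![0,0,0,0]],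 ![![0,0,0,0],![0,0,0,0],![0,1,0,-1],![0,0,0,2],![0,0,0,2],![0,0,0,0]], ![![0,0,0,0],![0,0,0,0],![0,0,1,-1],![0,0,0,2],![0,0,0,2],![0,0,0,0]], ![![0,0,0,0],![0,0,0,0],![0,0,0,0],![0,0,0,2],![0,0,0,2],![0,0,0,0]], ![![0,0,0,0],![0,0,0,0],![0,0,0,0],![1,0,0,1],![0,0,0,0],![0,0,0,0]], ![![0,0,0,0],![0,0,0,0],![0,0,0,0],![0,1,0,1],![0,0,0,0],![0,0,0,0]], ![![0,0,0,0],![0,0,0,0],![0,0,0,0],![0,0,1,1],![0,0,0,0],![0,0,0,0]], ![![0,0,0,0],![0,0,0,0],![0,0,0,0],![0,0,0,2],![0,0,0,0],![0,0,0,0]], ![![0,0,0,0],![0,0,0,0],![0,0,0,0],![0,0,0,0],![1,0,0,1],![0,0,0,0]], ![![0,0,0,0],![0,0,0,0],![0,0,0,0],![0,0,0,0],![0,1,0,1],![0,0,0,0]], ![![0,0,0,0],![0,0,0,0],![0,0,0,0],![0,0,0,0],![0,0,1,1],![0,0,0,0]], ![![0,0,0,0],![0,0,0,0],![0,0,0,0],![0,0,0,0],![0,0,0,2],![0,0,0,0]],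 ![![0,0,0,0],![0,0,0,0],![0,0,0,0],![0,0,0,0],![0,0,0,0],![1,0,0,1]], ![![0,0,0,0],![0,0,0,0],![0,0,0,0],![0,0,0,0],![0,0,0,0],![0,1,0,1]], ![![0,0,0,0],![0,0,0,0],![0,0,0,0],![0,0,0,0],![0,0,0,0],![0,0,1,1]], ![![0,0,0,0],![0,0,0,0],![0,0,0,0],![0,0,0,0],![0,0,0,0],![0,0,0,2]]]

def Bm : Fin 24 → Fin 6 → ℤ :=
  ![![0,-2,-2,-1,-1,-1], ![0,-2,-2,0,-1,0], ![0,-2,-2,0,-1,0], ![0,-2,-2,0,-1,0], ![0,0,-1,0,0,0], ![0,-1,-2,-1,0,0], ![0,-1,-2,-1,0,0], ![0,-1,-2,-1,0,0], ![0,-1,0,0,0,0], ![0,0,0,1,1,0], ![0,0,0,1,1,0], ![0,0,0,1,1,0], ![0,0,0,1,0,0], ![0,0,0,1,0,0], ![0,0,0,1,0,0], ![0,0,0,1,0,0], ![0,0,0,0,1,0], ![0,0,0,0,1,0], ![0,0,0,0,1,0], ![0,0,0,0,1,0], ![0,0,0,0,0,1], ![0,0,0,0,0,1], ![0,0,0,0,0,1],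 ![0,0,0,0,0,1]]

def Pw : Fin 7 → Fin 7 → ℤ :=
  ![![0,1,0,0,0,0,0], ![1,1,0,0,0,0,0], ![0,0,1,0,1,1,0], ![0,0,1,0,1,0,0], ![0,0,0,1,0,1,0], ![0,0,1,1,0,1,0], ![0,0,1,0,0,1,0]]

def Pc : Fin 7 → Fin 6 → Fin 4 → ℤ :=
  ![![![-1,0,0,-1],![-1,0,0,-1],![-1,0,0,-1],![-1,0,0,-1],![-1,0,0,-1],![-1,0,0,-1]], ![![-1,0,-1,-2],![-1,0,-1,-2],![-1,0,-1,-2],![-1,0,-1,-2],![-1,0,-1,-2],![-1,0,-1,-2]], ![![0,0,0,0],![-1,-1,-1,1],![-1,0,-1,-2],![-1,-1,0,0],![-1,-1,0,0],![-1,0,-1,-2]], ![![0,0,0,0],![-1,0,-1,0],![-1,-1,0,0],![-1,-1,0,0],![-1,0,-1,0],![0,0,0,-2]], ![![0,0,0,0],![-1,-1,0,0],![-1,-1,0,0],![-1,0,-1,0],![0,0,0,-2],![-1,0,-1,0]], ![![0,0,0,0],![-1,-1,0,0],![-1,0,-1,-2],![-1,-1,-1,1],![-1,0,-1,-2],![-1,-1,0,0]],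 ![![0,0,0,0],![-1,0,-1,0],![0,0,0,-2],![-1,0,-1,0],![-1,-1,0,0],![-1,-1,0,0]]]

def Pm : Fin 7 → Fin 6 → ℤ :=
  ![![-1,-1,-1,-1,-1,-1], ![-2,-2,-2,-2,-2,-2], ![0,-1,-2,-1,-1,-2], ![0,-1,-1,-1,-1,-1], ![0,-1,-1,-1,-1,-1], ![0,-1,-2,-1,-2,-1], ![0,-1,-1,-1,-1,-1]]

def GGt : Fin 7 → Fin 7 → ℤ :=
  ![![6,3,2,2,2,2,2], ![3,6,1,1,1,1,1], ![2,1,4,0,0,0,0], ![2,1,0,4,0,0,0], ![2,1,0,0,4,0,0], ![2,1,0,0,0,4,0], ![2,1,0,0,0,0,4]]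

def gTab : Fin 7 → Fin 6 → Fin 4 :=
  ![![1,1,1,1,1,1], ![2,2,2,2,2,2], ![0,0,2,3,3,2], ![0,2,3,3,2,0], ![0,3,3,2,0,2], ![0,3,2,0,2,3], ![0,2,0,2,3,3]]

def d4basis : Fin 4 → Fin 4 → ℚ := ![![1,-1,0,0],![0,1,-1,0],![0,0,1,-1],![0,0,1,1]]

def blockify (i : Fin 6) (v : Fin 4 → ℚ) : Fin 6 → Fin 4 → ℚ := fun i' => if i' = i then v else 0
set_option maxRecDepth 100000

theorem hGram4 : ∀ k l : Fin 24, (∑ i : Fin 6, ∑ j : Fin 4, Bz k i j * Bz l i j) = 4 * Gz k l := by decide +kernel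

theorem hGHz : Gz * Hzm = 1 := by decide +kernel

theorem hHGz : Hzm * Gz = 1 := by decide +kernel

theorem hGlueB : ∀ a : Fin 7, glueVecs a = ∑ k : Fin 24, zG a k • Bv k := by decide +kernel

theorem hEB : ∀ i : Fin 6, ∀ t : Fin 4, blockify i (d4basis t) = ∑ k : Fin 24, zE i t k • Bv k := by decide +kernel

theorem hBdec : ∀ k : Fin 24, Bv k = (fun i j => (Bc k i j : ℚ)) + ∑ a : Fin 7, Bw k a • glueVecs a := by decide +kernel

theorem hBsum : ∀ k i, Bc k i 0 + Bc k i 1 + Bc k i 2 + Bc k i 3 = 2 * Bm k i := by decide +kernel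

theorem hPdec : ∀ a : Fin 7, phi6 (glueVecs a) = (fun i j => (Pc a i j : ℚ)) + ∑ b : Fin 7, Pw a b • glueVecs b := by decide +kernel

theorem hPsum : ∀ a i, Pc a i 0 + Pc a i 1 + Pc a i 2 + Pc a i 3 = 2 * Pm a i := by decide +kernel

theorem hGGt : ∀ a b : Fin 7, dotQ (glueVecs a) (glueVecs b) = (GGt a b : ℚ) := by decide +kernel

theorem hgTab : ∀ a i, glueVecs a i = glue (gTab a i) := by decide +kernel

theorem hGGeven : ∀ a : Fin 7, GGt a a = 2 * (![3,3,2,2,2,2,2] : Fin 7 → ℤ) a := by decide +kernel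

theorem hA3 : ((1/2:ℚ) • phiMQ) * ((1/2:ℚ) • phiMQ) * ((1/2:ℚ) • phiMQ) = 1 := by decide +kernel

/-! ### dotQ API -/

lemma dotQ_add_left (a b y : Fin 6 → Fin 4 → ℚ) : dotQ (a + b) y = dotQ a y + dotQ b y := by
  simp [dotQ, add_mul, Finset.sum_add_distrib]

lemma dotQ_neg_left (a y : Fin 6 → Fin 4 → ℚ) : dotQ (-a) y = -dotQ a y := by
  simp [dotQ, Finset.sum_neg_distrib]

lemma dotQ_comm (a y : Fin 6 → Fin 4 → ℚ) : dotQ a y = dotQ y a := by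
  simp [dotQ, mul_comm]

lemma dotQ_zero_left (y : Fin 6 → Fin 4 → ℚ) : dotQ 0 y = 0 := by simp [dotQ]

lemma dotQ_zero_right (y : Fin 6 → Fin 4 → ℚ) : dotQ y 0 = 0 := by simp [dotQ]

lemma dotQ_add_right (a b y : Fin 6 → Fin 4 → ℚ) : dotQ y (a + b) = dotQ y a + dotQ y b := by
  rw [dotQ_comm, dotQ_add_left, dotQ_comm a y, dotQ_comm b y]

lemma dotQ_neg_right (a y : Fin 6 → Fin 4 → ℚ) : dotQ y (-a) = -dotQ y a := by
  rw [dotQ_comm, dotQ_neg_left, dotQ_comm a y]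

lemma dotQ_sub_left (a b y : Fin 6 → Fin 4 → ℚ) : dotQ (a - b) y = dotQ a y - dotQ b y := by
  rw [sub_eq_add_neg, dotQ_add_left, dotQ_neg_left, sub_eq_add_neg]

lemma dotQ_smul_left (q : ℚ) (a y : Fin 6 → Fin 4 → ℚ) : dotQ (q • a) y = q * dotQ a y := by
  simp [dotQ, Finset.mul_sum, mul_assoc]

lemma dotQ_zsmul_left (n : ℤ) (a y : Fin 6 → Fin 4 → ℚ) : dotQ (n • a) y = (n : ℚ) * dotQ a y := by
  simp [dotQ, Finset.mul_sum, mul_assoc]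

lemma dotQ_sum_left {ι : Type*} (s : Finset ι) (f : ι → (Fin 6 → Fin 4 → ℚ)) (y : Fin 6 → Fin 4 → ℚ) :
    dotQ (∑ k ∈ s, f k) y = ∑ k ∈ s, dotQ (f k) y := by
  classical
  induction s using Finset.induction_on with
  | empty => simp [dotQ]
  | insert _ _ h ih => rw [Finset.sum_insert h, Finset.sum_insert h, dotQ_add_left, ih]

lemma dotQ_cast (k k' : Fin 6 → Fin 4 → ℤ) :
    dotQ (fun i j => (k i j : ℚ)) (fun i j => (k' i j : ℚ))
      = ((∑ i, ∑ j, k i j * k' i j : ℤ) : ℚ) := by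
  simp only [dotQ]
  push_cast
  rfl

/-! ### D4 membership helpers -/

lemma mem_D4Q (x : Fin 4 → ℚ) :
    x ∈ D4Q ↔ ((∀ j, ∃ k : ℤ, x j = k) ∧ ∃ m : ℤ, ∑ j, x j = 2 * m) := Iff.rfl

lemma d4_exists {x : Fin 4 → ℚ} (hx : x ∈ D4Q) :
    ∃ (k : Fin 4 → ℤ) (m : ℤ), (∀ j, x j = k j) ∧ k 0 + k 1 + k 2 + k 3 = 2 * m := by
  obtain ⟨hint, m, hm⟩ := (mem_D4Q x).mp hx
  choose k hk using hint
  refine ⟨k, m, hk, ?_⟩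
  have h : ((k 0 + k 1 + k 2 + k 3 : ℤ) : ℚ) = ((2 * m : ℤ) : ℚ) := by
    push_cast
    rw [← hk 0, ← hk 1, ← hk 2, ← hk 3]
    rw [Fin.sum_univ_four] at hm
    linarith
  exact_mod_cast h

def genSet : Set (Fin 6 → Fin 4 → ℚ) := {x | ∀ i, x i ∈ D4Q} ∪ Set.range glueVecs

lemma NLat_eq : NLat = AddSubgroup.closure genSet := rfl

lemma glue_memN (a : Fin 7) : glueVecs a ∈ NLat :=
  AddSubgroup.subset_closure (Or.inr ⟨a, rfl⟩)

lemma memN (x : Fin 6 → Fin 4 → ℚ) (w : Fin 7 → ℤ) (c : Fin 6 → Fin 4 → ℤ) (m : Fin 6 → ℤ)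
    (h : x = (fun i j => (c i j : ℚ)) + ∑ a, w a • glueVecs a)
    (hs : ∀ i, c i 0 + c i 1 + c i 2 + c i 3 = 2 * m i) : x ∈ NLat := by
  rw [h]
  refine add_mem ?_ (sum_mem fun a _ => zsmul_mem (glue_memN a) _)
  refine AddSubgroup.subset_closure (Or.inl fun i => (mem_D4Q _).mpr ⟨fun j => ⟨c i j, rfl⟩, m i, ?_⟩)
  show (∑ j, ((c i j : ℚ))) = 2 * (m i : ℚ)
  rw [Fin.sum_univ_four]
  exact_mod_cast hs i

lemma hBmemN (k : Fin 24) : Bv k ∈ NLat := memN _ (Bw k) (Bc k) (Bm k) (hBdec k) (hBsum k)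

/-! ### integrality -/

lemma d4_dot_glue {x : Fin 4 → ℚ} (hx : x ∈ D4Q) (t : Fin 4) :
    ∃ n : ℤ, ∑ j, x j * glue t j = n := by
  obtain ⟨k, m, hk, hm⟩ := d4_exists hx
  have hmq : (k 0 : ℚ) + k 1 + k 2 + k 3 = 2 * m := by exact_mod_cast hm
  fin_cases t
  · exact ⟨0, by simp [glue, Fin.sum_univ_four]⟩
  · refine ⟨m, ?_⟩
    simp [glue, Fin.sum_univ_four, hk 0, hk 1, hk 2, hk 3]
    linarith
  · refine ⟨k 3, ?_⟩
    simp [glue, Fin.sum_univ_four, hk 0, hk 1, hk 2, hk 3]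
  · refine ⟨m - k 3, ?_⟩
    simp [glue, Fin.sum_univ_four, hk 0, hk 1, hk 2, hk 3]
    push_cast
    linarith

lemma d4_dot_glueVecs {d : Fin 6 → Fin 4 → ℚ} (hd : ∀ i, d i ∈ D4Q) (a : Fin 7) :
    ∃ n : ℤ, dotQ d (glueVecs a) = n := by
  have h : ∀ i : Fin 6, ∃ n : ℤ, ∑ j, d i j * glueVecs a i j = n := by
    intro i
    rw [hgTab a i]
    exact d4_dot_glue (hd i) _
  choose n hn using h
  refine ⟨∑ i, n i, ?_⟩
  simp only [dotQ]
  push_cast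
  exact Finset.sum_congr rfl fun i _ => hn i

lemma gen_dot_int : ∀ g ∈ genSet, ∀ g' ∈ genSet, ∃ n : ℤ, dotQ g g' = n := by
  rintro g (hg | ⟨a, rfl⟩) g' (hg' | ⟨b, rfl⟩)
  · choose k m hk hm using fun i => d4_exists (hg i)
    choose k' m' hk' hm' using fun i => d4_exists (hg' i)
    refine ⟨∑ i, ∑ j, k i j * k' i j, ?_⟩
    have h1 : g = fun i j => (k i j : ℚ) := by funext i j; exact hk i j
    have h2 : g' = fun i j => (k' i j : ℚ) := by funext i j; exact hk' i j
    rw [h1, h2, dotQ_cast]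
  · exact d4_dot_glueVecs hg b
  · obtain ⟨n, hn⟩ := d4_dot_glueVecs hg' a
    exact ⟨n, by rwa [dotQ_comm]⟩
  · exact ⟨GGt a b, hGGt a b⟩

def intDotSub (x : Fin 6 → Fin 4 → ℚ) : AddSubgroup (Fin 6 → Fin 4 → ℚ) where
  carrier := {y | ∃ n : ℤ, dotQ x y = n}
  add_mem' := by
    rintro a b ⟨n1, h1⟩ ⟨n2, h2⟩
    exact ⟨n1 + n2, by rw [dotQ_add_right, h1, h2]; push_cast; ring⟩
  zero_mem' := ⟨0, by simp [dotQ_zero_right]⟩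
  neg_mem' := by
    rintro a ⟨n, h⟩
    exact ⟨-n, by rw [dotQ_neg_right, h]; push_cast; ring⟩

def intDotSub' : AddSubgroup (Fin 6 → Fin 4 → ℚ) where
  carrier := {x | ∀ y ∈ NLat, ∃ n : ℤ, dotQ x y = n}
  add_mem' := by
    rintro a b h1 h2 y hy
    obtain ⟨n1, hn1⟩ := h1 y hy
    obtain ⟨n2, hn2⟩ := h2 y hy
    exact ⟨n1 + n2, by rw [dotQ_add_left, hn1, hn2]; push_cast; ring⟩
  zero_mem' := fun y _ => ⟨0, by simp [dotQ_zero_left]⟩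
  neg_mem' := by
    rintro a h y hy
    obtain ⟨n, hn⟩ := h y hy
    exact ⟨-n, by rw [dotQ_neg_left, hn]; push_cast; ring⟩

lemma nlat_dot_int : ∀ x ∈ NLat, ∀ y ∈ NLat, ∃ n : ℤ, dotQ x y = n := by
  have h : NLat ≤ intDotSub' := by
    rw [NLat_eq]
    refine (AddSubgroup.closure_le _).mpr ?_
    intro g hg
    show ∀ y ∈ NLat, ∃ n : ℤ, dotQ g y = n
    have h2 : NLat ≤ intDotSub g := by
      rw [NLat_eq]
      refine (AddSubgroup.closure_le _).mpr ?_
      intro g' hg'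
      exact gen_dot_int g hg g' hg'
    exact fun y hy => h2 hy
  exact fun x hx => h hx

/-! ### evenness -/

lemma nlat_even : ∀ x ∈ NLat, ∃ m : ℤ, dotQ x x = 2 * m := by
  intro x hx
  refine AddSubgroup.closure_induction (p := fun z _ => ∃ m : ℤ, dotQ z z = 2 * m) ?_ ?_ ?_ ?_ hx
  · rintro g (hg | ⟨a, rfl⟩)
    · choose k m hk hm using fun i => d4_exists (hg i)
      have sqpar : ∀ a : ℤ, Even (a * a - a) := by
        intro a
        have h := Int.even_mul_succ_self (a - 1)
        rwa [show (a - 1) * (a - 1 + 1) = a * a - a by ring] at h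
      have hblock : ∀ i : Fin 6, Even (∑ j, k i j * k i j) := by
        intro i
        have h4 : (∑ j, k i j * k i j)
            = ((k i 0 * k i 0 - k i 0) + (k i 1 * k i 1 - k i 1)
              + (k i 2 * k i 2 - k i 2) + (k i 3 * k i 3 - k i 3)) + (k i 0 + k i 1 + k i 2 + k i 3) := by
          rw [Fin.sum_univ_four]; ring
        rw [h4, hm i]
        exact Even.add (Even.add (Even.add (Even.add (sqpar _) (sqpar _)) (sqpar _)) (sqpar _)) (even_two_mul (m i))
      have htot : Even (∑ i, ∑ j, k i j * k i j) := by
        rw [even_iff_two_dvd]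
        refine Finset.dvd_sum fun i _ => ?_
        rw [← even_iff_two_dvd]
        exact hblock i
      obtain ⟨mm, hmm⟩ := htot
      refine ⟨mm, ?_⟩
      have h1 : g = fun i j => (k i j : ℚ) := by funext i j; exact hk i j
      rw [h1, dotQ_cast, hmm]
      push_cast
      ring
    · refine ⟨(![3,3,2,2,2,2,2] : Fin 7 → ℤ) a, ?_⟩
      rw [hGGt a a, hGGeven a]
      push_cast
      ring
  · exact ⟨0, by simp [dotQ_zero_left]⟩
  · intro a b ha' hb' pa pb
    obtain ⟨ma, hma⟩ := pa
    obtain ⟨mb, hmb⟩ := pb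
    obtain ⟨n, hn⟩ := nlat_dot_int a ha' b hb'
    refine ⟨ma + mb + n, ?_⟩
    rw [dotQ_add_left, dotQ_add_right, dotQ_add_right, hma, hmb, dotQ_comm b a, hn]
    push_cast
    ring
  · intro a _ pa
    obtain ⟨m, hm⟩ := pa
    exact ⟨m, by rwa [dotQ_neg_left, dotQ_neg_right, neg_neg]⟩

/-! ### positivity -/

lemma dotQ_self_pos (x : Fin 6 → Fin 4 → ℚ) (hx : x ≠ 0) : 0 < dotQ x x := by
  obtain ⟨i, hi⟩ : ∃ i, x i ≠ 0 := by
    by_contra h; push_neg at h; exact hx (funext h)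
  obtain ⟨j, hj⟩ : ∃ j, x i j ≠ 0 := by
    by_contra h; push_neg at h; exact hi (funext h)
  have hinner : 0 < ∑ jj, x i jj * x i jj :=
    Finset.sum_pos' (fun t _ => mul_self_nonneg _) ⟨j, Finset.mem_univ j, mul_self_pos.mpr hj⟩
  show 0 < ∑ i, ∑ j, x i j * x i j
  exact Finset.sum_pos' (fun t _ => Finset.sum_nonneg fun s _ => mul_self_nonneg _)
    ⟨i, Finset.mem_univ i, hinner⟩

/-! ### NLat = closure (range Bv) -/

lemma hEmem (i : Fin 6) (t : Fin 4) :
    blockify i (d4basis t) ∈ AddSubgroup.closure (Set.range Bv) := by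
  rw [hEB i t]
  exact sum_mem fun k _ => zsmul_mem (AddSubgroup.subset_closure (Set.mem_range_self k)) _

lemma d4_comb (k : Fin 4 → ℤ) (m : ℤ) (hm : k 0 + k 1 + k 2 + k 3 = 2 * m) (i : Fin 6) :
    blockify i (fun j => (k j : ℚ))
      = k 0 • blockify i (d4basis 0) + (k 0 + k 1) • blockify i (d4basis 1)
        + (k 0 + k 1 + k 2 - m) • blockify i (d4basis 2) + m • blockify i (d4basis 3) := by
  have hmq : (k 0 : ℚ) + k 1 + k 2 + k 3 = 2 * m := by exact_mod_cast hm
  funext i' j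
  by_cases h : i' = i
  · subst h
    fin_cases j <;> simp [blockify, d4basis, ite_apply] <;> push_cast <;> linarith
  · simp [blockify, h]

lemma blockify_mem {i : Fin 6} {x : Fin 4 → ℚ} (hx : x ∈ D4Q) :
    blockify i x ∈ AddSubgroup.closure (Set.range Bv) := by
  obtain ⟨k, m, hk, hm⟩ := d4_exists hx
  have h1 : x = fun j => (k j : ℚ) := funext hk
  rw [h1, d4_comb k m hm i]
  exact add_mem (add_mem (add_mem (zsmul_mem (hEmem i 0) _) (zsmul_mem (hEmem i 1) _))
    (zsmul_mem (hEmem i 2) _)) (zsmul_mem (hEmem i 3) _)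

lemma sum_blockify (d : Fin 6 → Fin 4 → ℚ) : (∑ i : Fin 6, blockify i (d i)) = d := by
  funext i' j
  simp only [Finset.sum_apply, blockify]
  rw [Finset.sum_congr rfl (fun i (_ : i ∈ Finset.univ) => show (if i' = i then d i else 0) j
    = if i' = i then d i j else 0 from apply_ite (fun v : Fin 4 → ℚ => v j) _ _ _)]
  simp

lemma hNB : NLat = AddSubgroup.closure (Set.range Bv) := by
  apply le_antisymm
  · rw [NLat_eq]
    refine (AddSubgroup.closure_le _).mpr ?_
    rintro g (hg | ⟨a, rfl⟩)
    · rw [← sum_blockify g]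
      exact sum_mem fun i _ => blockify_mem (hg i)
    · rw [hGlueB a]
      exact sum_mem fun k _ => zsmul_mem (AddSubgroup.subset_closure (Set.mem_range_self k)) _
  · refine (AddSubgroup.closure_le _).mpr ?_
    rintro g ⟨k, rfl⟩
    exact hBmemN k

/-! ### Gram matrix facts -/

lemma hGram (k l : Fin 24) : dotQ (Bv k) (Bv l) = (Gz k l : ℚ) := by
  have step : dotQ (Bv k) (Bv l) = ((∑ i, ∑ j, Bz k i j * Bz l i j : ℤ) : ℚ) / 4 := by
    simp only [dotQ, Bv]
    push_cast
    rw [Finset.sum_div]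
    refine Finset.sum_congr rfl fun i _ => ?_
    rw [Finset.sum_div]
    refine Finset.sum_congr rfl fun j _ => ?_
    ring
  rw [step, hGram4 k l]
  push_cast
  ring

def GzQ : Matrix (Fin 24) (Fin 24) ℚ := Gz.map (Int.cast)
def HzQ : Matrix (Fin 24) (Fin 24) ℚ := Hzm.map (Int.cast)

lemma hGHQ : GzQ * HzQ = 1 := by
  have h := congrArg (Int.castRingHom ℚ).mapMatrix hGHz
  rw [map_mul, map_one] at h
  simpa [GzQ, HzQ, RingHom.mapMatrix_apply, Int.coe_castRingHom] using h

/-! ### linear independence -/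

lemma li_Q : LinearIndependent ℚ Bv := by
  rw [Fintype.linearIndependent_iff]
  intro c hc
  have h2 : ∀ l, (∑ k, c k * (Gz k l : ℚ)) = 0 := by
    intro l
    have h1 : dotQ (∑ k, c k • Bv k) (Bv l) = 0 := by rw [hc, dotQ_zero_left]
    rw [dotQ_sum_left] at h1
    simp_rw [dotQ_smul_left, hGram] at h1
    exact h1
  have h3 : Matrix.vecMul c GzQ = 0 := by
    funext l
    simpa [Matrix.vecMul, dotProduct, GzQ, Matrix.map_apply] using h2 l
  have h4 : c = 0 := by
    have h5 : Matrix.vecMul (Matrix.vecMul c GzQ) HzQ = c := by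
      rw [Matrix.vecMul_vecMul, hGHQ, Matrix.vecMul_one]
    rw [h3, Matrix.zero_vecMul] at h5
    exact h5.symm
  exact fun k => congrFun h4 k

lemma li_Z : LinearIndependent ℤ Bv := by
  refine li_Q.restrict_scalars ?_
  intro a b h
  have : ((a : ℚ)) = (b : ℚ) := by simpa [zsmul_eq_mul] using h
  exact_mod_cast this

/-! ### basis of NLat -/

lemma mem_span_iff (x : Fin 6 → Fin 4 → ℚ) :
    x ∈ Submodule.span ℤ (Set.range Bv) ↔ x ∈ NLat := by
  rw [hNB, ← Submodule.span_int_eq_addSubgroupClosure]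
  exact Iff.rfl

noncomputable def eAdd : (↥(Submodule.span ℤ (Set.range Bv))) ≃+ ↥NLat where
  toFun x := ⟨x.1, (mem_span_iff x.1).mp x.2⟩
  invFun x := ⟨x.1, (mem_span_iff x.1).mpr x.2⟩
  left_inv := fun x => rfl
  right_inv := fun x => rfl
  map_add' := fun x y => rfl

noncomputable def basisN : Module.Basis (Fin 24) ℤ ↥NLat :=
  (Module.Basis.span li_Z).map eAdd.toIntLinearEquiv

lemma freeN : Module.Free ℤ ↥NLat := Module.Free.of_basis basisN

lemma finiteN : Module.Finite ℤ ↥NLat := Module.Finite.of_basis basisN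

lemma finrankN : Module.finrank ℤ ↥NLat = 24 := by
  rw [Module.finrank_eq_card_basis basisN, Fintype.card_fin]

/-! ### unimodularity -/

lemma unimod (f : ↥NLat →+ ℤ) :
    ∃! x : ↥NLat, ∀ y : ↥NLat, dotQ x.val y.val = (f y : ℚ) := by
  classical
  set v : Fin 24 → ℤ := fun k => f ⟨Bv k, hBmemN k⟩ with hv
  set c : Fin 24 → ℤ := Matrix.vecMul v Hzm with hc
  have key : Matrix.vecMul c Gz = v := by
    rw [hc, Matrix.vecMul_vecMul, hHGz, Matrix.vecMul_one]
  set x0 : Fin 6 → Fin 4 → ℚ := ∑ k, c k • Bv k with hx0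
  have hx0N : x0 ∈ NLat := sum_mem fun k _ => zsmul_mem (hBmemN k) _
  have hdot : ∀ l, dotQ x0 (Bv l) = (v l : ℚ) := by
    intro l
    rw [hx0, dotQ_sum_left]
    have hterm : ∀ k : Fin 24, dotQ (c k • Bv k) (Bv l) = ((c k * Gz k l : ℤ) : ℚ) := by
      intro k
      rw [dotQ_zsmul_left, hGram]
      push_cast
      ring
    rw [Finset.sum_congr rfl fun k _ => hterm k]
    have hvm : (Matrix.vecMul c Gz) l = ∑ k, c k * Gz k l := rfl
    rw [← Int.cast_sum, ← hvm, key]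
  have main : ∀ y (hy : y ∈ NLat), dotQ x0 y = (f ⟨y, hy⟩ : ℚ) := by
    intro y hy
    have hy' : y ∈ AddSubgroup.closure (Set.range Bv) := hNB ▸ hy
    have hres : dotQ x0 y = (f ⟨y, hNB ▸ hy'⟩ : ℚ) := by
      refine AddSubgroup.closure_induction
        (p := fun z hz => dotQ x0 z = (f ⟨z, hNB ▸ hz⟩ : ℚ)) ?_ ?_ ?_ ?_ hy'
      · rintro z ⟨l, rfl⟩
        rw [hdot l]
      · show dotQ x0 0 = ((f 0 : ℤ) : ℚ)
        simp [map_zero, dotQ_zero_right]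
      · intro a b ha hb pa pb
        show dotQ x0 (a + b) = ((f (⟨a, hNB ▸ ha⟩ + ⟨b, hNB ▸ hb⟩) : ℤ) : ℚ)
        rw [map_add, dotQ_add_right, pa, pb]
        push_cast
        ring
      · intro a ha pa
        show dotQ x0 (-a) = ((f (-⟨a, hNB ▸ ha⟩) : ℤ) : ℚ)
        rw [map_neg, dotQ_neg_right, pa]
        push_cast
        ring
    exact hres
  refine ⟨⟨x0, hx0N⟩, fun y => main y.1 y.2, ?_⟩
  intro x' hx'
  have hdall : ∀ y : ↥NLat, dotQ (x'.1 - x0) y.1 = 0 := by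
    intro y
    rw [dotQ_sub_left, hx' y, main y.1 y.2]
    ring
  have hdN : x'.1 - x0 ∈ NLat := sub_mem x'.2 hx0N
  have hzero : x'.1 - x0 = 0 := by
    by_contra hne
    have hpos := dotQ_self_pos _ hne
    rw [hdall ⟨x'.1 - x0, hdN⟩] at hpos
    exact lt_irrefl 0 hpos
  exact Subtype.ext (sub_eq_zero.mp hzero)

/-! ### phi6 -/

lemma phi6_add (x y : Fin 6 → Fin 4 → ℚ) : phi6 (x + y) = phi6 x + phi6 y := by
  funext i
  simp [phi6, Matrix.mulVec_add]

lemma phi6_neg (x : Fin 6 → Fin 4 → ℚ) : phi6 (-x) = -phi6 x := by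
  funext i
  simp [phi6, Matrix.mulVec_neg]

lemma phi6_zero : phi6 0 = 0 := by
  funext i
  simp [phi6]

lemma mulVec_phi (v : Fin 4 → ℚ) (j : Fin 4) :
    ((1/2:ℚ) • phiMQ).mulVec v j
      = (phiMQ j 0 * v 0 + phiMQ j 1 * v 1 + phiMQ j 2 * v 2 + phiMQ j 3 * v 3)/2 := by
  simp [Matrix.mulVec, dotProduct, Fin.sum_univ_four, Matrix.smul_apply]
  ring

lemma phi_d4 {x : Fin 4 → ℚ} (hx : x ∈ D4Q) : ((1/2 : ℚ) • phiMQ).mulVec x ∈ D4Q := by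
  obtain ⟨k, m, hk, hm⟩ := d4_exists hx
  have hmq : (k 0 : ℚ) + k 1 + k 2 + k 3 = 2 * m := by exact_mod_cast hm
  refine (mem_D4Q _).mpr ⟨?_, ⟨m - k 1 - k 2 - k 3, ?_⟩⟩
  · intro j
    refine ⟨![-m, m - k 1 - k 2, m - k 2 - k 3, m - k 1 - k 3] j, ?_⟩
    rw [mulVec_phi]
    fin_cases j <;> norm_num [phiMQ, Matrix.vecHead, Matrix.vecTail, hk 0, hk 1, hk 2, hk 3] <;> push_cast <;> linarith
  · rw [Fin.sum_univ_four, mulVec_phi, mulVec_phi, mulVec_phi, mulVec_phi]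
    norm_num [phiMQ, Matrix.vecHead, Matrix.vecTail, hk 0, hk 1, hk 2, hk 3]
    push_cast
    linarith

lemma phi_mem : ∀ x ∈ NLat, phi6 x ∈ NLat := by
  intro x hx
  refine AddSubgroup.closure_induction (p := fun z _ => phi6 z ∈ NLat) ?_ ?_ ?_ ?_ hx
  · rintro g (hg | ⟨a, rfl⟩)
    · exact AddSubgroup.subset_closure (Or.inl fun i => phi_d4 (hg i))
    · exact memN _ (Pw a) (Pc a) (Pm a) (hPdec a) (hPsum a)
  · show phi6 0 ∈ NLat
    rw [phi6_zero]; exact zero_mem _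
  · intro a b _ _ pa pb
    show phi6 (a + b) ∈ NLat
    rw [phi6_add]; exact add_mem pa pb
  · intro a _ pa
    show phi6 (-a) ∈ NLat
    rw [phi6_neg]; exact neg_mem pa

lemma phi6_cube : phi6 ∘ phi6 ∘ phi6 = id := by
  funext x i
  show ((1/2:ℚ) • phiMQ).mulVec (((1/2:ℚ) • phiMQ).mulVec (((1/2:ℚ) • phiMQ).mulVec (x i))) = x i
  rw [Matrix.mulVec_mulVec, Matrix.mulVec_mulVec, hA3, Matrix.one_mulVec]

lemma phi6_image : phi6 '' (NLat : Set (Fin 6 → Fin 4 → ℚ)) = (NLat : Set (Fin 6 → Fin 4 → ℚ)) := by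
  ext x
  constructor
  · rintro ⟨y, hy, rfl⟩
    exact phi_mem y hy
  · intro hx
    exact ⟨phi6 (phi6 x), phi_mem _ (phi_mem _ hx), congrFun phi6_cube x⟩

lemma phi6_isom : ∀ x y, dotQ (phi6 x) (phi6 y) = dotQ x y := by
  intro x y
  unfold dotQ
  refine Finset.sum_congr rfl fun i _ => ?_
  rw [Fin.sum_univ_four, Fin.sum_univ_four]
  show ((1/2:ℚ) • phiMQ).mulVec (x i) 0 * ((1/2:ℚ) • phiMQ).mulVec (y i) 0
      + ((1/2:ℚ) • phiMQ).mulVec (x i) 1 * ((1/2:ℚ) • phiMQ).mulVec (y i) 1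
      + ((1/2:ℚ) • phiMQ).mulVec (x i) 2 * ((1/2:ℚ) • phiMQ).mulVec (y i) 2
      + ((1/2:ℚ) • phiMQ).mulVec (x i) 3 * ((1/2:ℚ) • phiMQ).mulVec (y i) 3
      = x i 0 * y i 0 + x i 1 * y i 1 + x i 2 * y i 2 + x i 3 * y i 3
  simp only [mulVec_phi]
  norm_num [phiMQ, Matrix.of_apply, Matrix.cons_val_zero, Matrix.cons_val_one, Matrix.cons_val_two, Matrix.cons_val_three]
  ring

lemma phi6_ne : phi6 ≠ id := by
  intro h
  have h1 := congrFun (congrFun (congrFun h fun _ => ![1,0,0,0]) 0) 0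
  rw [show (phi6 (fun _ => ![1,0,0,0]) 0 0) = ((1/2:ℚ) • phiMQ).mulVec ![1,0,0,0] 0 from rfl,
    mulVec_phi] at h1
  norm_num [phiMQ, Matrix.of_apply, Matrix.cons_val_zero, Matrix.cons_val_one, Matrix.cons_val_two, Matrix.cons_val_three] at h1

lemma fixed_zero : ∀ x : Fin 6 → Fin 4 → ℚ, phi6 x = x → x = 0 := by
  intro x h
  funext i j
  have h0 := congrFun (congrFun h i) 0
  have h1 := congrFun (congrFun h i) 1
  have h2 := congrFun (congrFun h i) 2
  have h3 := congrFun (congrFun h i) 3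
  rw [show phi6 x i 0 = ((1/2:ℚ) • phiMQ).mulVec (x i) 0 from rfl, mulVec_phi] at h0
  rw [show phi6 x i 1 = ((1/2:ℚ) • phiMQ).mulVec (x i) 1 from rfl, mulVec_phi] at h1
  rw [show phi6 x i 2 = ((1/2:ℚ) • phiMQ).mulVec (x i) 2 from rfl, mulVec_phi] at h2
  rw [show phi6 x i 3 = ((1/2:ℚ) • phiMQ).mulVec (x i) 3 from rfl, mulVec_phi] at h3
  norm_num [phiMQ, Matrix.of_apply, Matrix.cons_val_zero, Matrix.cons_val_one, Matrix.cons_val_two, Matrix.cons_val_three] at h0 h1 h2 h3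
  have ha : x i 0 = 0 := by linarith
  have hb : x i 1 = 0 := by linarith
  have hc : x i 2 = 0 := by linarith
  have hd : x i 3 = 0 := by linarith
  show x i j = 0
  fin_cases j
  · exact ha
  · exact hb
  · exact hc
  · exact hd

lemma fixed_set : {x : Fin 6 → Fin 4 → ℚ | x ∈ NLat ∧ phi6 x = x} = {0} := by
  ext x
  simp only [Set.mem_setOf_eq, Set.mem_singleton_iff]
  constructor
  · rintro ⟨_, hfix⟩
    exact fixed_zero x hfix
  · rintro rfl
    exact ⟨zero_mem _, phi6_zero⟩

/-- `N = Ni(D₄⁶)` is an even unimodular positive-definite lattice of rank 24; the map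
`φ⁽⁶⁾` preserves `N`, is an isometry of order 3, and has no nonzero fixed point in `N`
(it is the automorphism `σ₂ = φ⁽⁶⁾` of `Ni(D₄⁶)`,
with `rank Ni(D₄⁶)^{σ₂} = 0`). -/
theorem stmt19 :
    (Module.Free ℤ ↥NLat ∧ Module.Finite ℤ ↥NLat ∧ Module.finrank ℤ ↥NLat = 24) ∧
    (∀ x ∈ NLat, ∀ y ∈ NLat, ∃ n : ℤ, dotQ x y = n) ∧
    (∀ x ∈ NLat, ∃ m : ℤ, dotQ x x = 2 * m) ∧
    (∀ x ∈ NLat, x ≠ 0 → 0 < dotQ x x) ∧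
    (∀ f : ↥NLat →+ ℤ, ∃! x : ↥NLat, ∀ y : ↥NLat, dotQ x.val y.val = (f y : ℚ)) ∧
    phi6 '' (NLat : Set (Fin 6 → Fin 4 → ℚ)) = (NLat : Set (Fin 6 → Fin 4 → ℚ)) ∧
    (∀ x y, dotQ (phi6 x) (phi6 y) = dotQ x y) ∧
    (phi6 ∘ phi6 ∘ phi6 = id ∧ phi6 ≠ id) ∧
    {x : Fin 6 → Fin 4 → ℚ | x ∈ NLat ∧ phi6 x = x} = {0} := by
  exact ⟨⟨freeN, finiteN, finrankN⟩, nlat_dot_int, nlat_even,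
    fun x _ hne => dotQ_self_pos x hne, unimod, phi6_image, phi6_isom,
    ⟨phi6_cube, phi6_ne⟩, fixed_set⟩
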